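/- Let G and K be groups and D a subgroup of G × K. Then DD°DD° = DD° as relations on G: for all x, x' ∈ G, (∃ z ∈ G, ∃ y y' ∈ K, (x, y) ∈ D ∧ (z, y) ∈ D ∧ (z, y') ∈ D ∧ (x', y') ∈ D) if and only if (∃ y ∈ K, (x, y) ∈ D ∧ (x', y) ∈ D). -/
import Mathlib

/-- `DD°DD° = DD°` for any internal relation `D` between groups. -/
theorem subgroup_relation_DDop_idem {G K : Type*} [Group G] [Group K]
    (D : Subgroup (G × K)) :
    ∀ x x' : G,
      (∃ z : G, ∃ y y' : K, (x, y) ∈ D ∧ (z, y) ∈ D ∧ (z, y') ∈ D ∧ (x', y') ∈ D) ↔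
        (∃ y : K, (x, y) ∈ D ∧ (x', y) ∈ D) := by
  intro x x'
  constructor
  · rintro ⟨z, y, y', h1, h2, h3, h4⟩
    refine ⟨y', ?_, h4⟩
    have := D.mul_mem (D.mul_mem h1 (D.inv_mem h2)) h3
    simpa using this
  · rintro ⟨y, h1, h2⟩
    exact ⟨x, y, y, h1, h1, h1, h2⟩
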